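/- If D is a biplane with parameters (79,13,2) and x is a nontrivial automorphism of 3-power order, then x fixes exactly one point and exactly one block. -/

import Mathlib

open Finset

section Helpers
variable {α β : Type*}

lemma doubleCount (A : Finset α) (B : Finset β) (R : α → β → Prop)
    [∀ a b, Decidable (R a b)] :
    ∑ a ∈ A, (B.filter (fun b => R a b)).card = ∑ b ∈ B, (A.filter (fun a => R a b)).card := by
  simp only [Finset.card_filter]
  exact Finset.sum_comm

lemma offDiag_filter_both [DecidableEq α] (s : Finset α) (pred : α → Prop) [DecidablePred pred] :
    s.offDiag.filter (fun xy => pred xy.1 ∧ pred xy.2) = (s.filter pred).offDiag := by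
  ext ⟨x, y⟩
  simp only [mem_filter, Finset.mem_offDiag]
  tauto

lemma solve_quad {d s : ℕ} (h : d * d - d = 2 * (s - 1)) (hd3 : d % 3 = 1) (hd13 : d ≤ 13)
    (hs : 2 ≤ s) :
    (d = 4 ∧ s = 7) ∨ (d = 7 ∧ s = 22) ∨ (d = 10 ∧ s = 46) ∨ (d = 13 ∧ s = 79) := by
  interval_cases d <;> omega
end Helpers


lemma fix_of_two {α : Type*} [DecidableEq α] (σ : Equiv.Perm α) (m : ℕ)
    (hord : σ ^ 3 ^ m = 1) (T : Finset α) (hT : T.card = 2)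
    (hinv : ∀ a ∈ T, σ a ∈ T) : ∀ a ∈ T, σ a = a := by
  obtain ⟨a, b, hab, rfl⟩ := Finset.card_eq_two.1 hT
  have hodd : Odd (3 ^ m) := Odd.pow (by decide)
  obtain ⟨t, ht⟩ := hodd
  have key : ∀ x y : α, x ≠ y → σ x ≠ x → (∀ c ∈ ({x, y} : Finset α), σ c ∈ ({x, y} : Finset α)) → False := by
    intro x y hxy hx hinv'
    have hσx : σ x = y := by
      have := hinv' x (by simp)
      simp only [mem_insert, mem_singleton] at this
      tauto
    have hσy : σ y = x := by
      have := hinv' y (by simp)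
      simp only [mem_insert, mem_singleton] at this
      rcases this with h | h
      · exact h
      · exact absurd (σ.injective (hσx.trans h.symm)) hxy
    have h2 : (σ ^ 2) x = x := by
      simp [pow_succ, hσx, hσy]
    have h2t : (σ ^ (2 * t)) x = x := by
      rw [pow_mul]
      exact Function.IsFixedPt.perm_pow h2 t
    have : (σ ^ (2 * t + 1)) x = x := by rw [← ht, hord]; rfl
    rw [pow_succ', Equiv.Perm.mul_apply, h2t] at this
    exact hx this
  intro c hc
  by_contra hcne
  simp only [mem_insert, mem_singleton] at hc
  rcases hc with rfl | rfl
  · exact key c b hab hcne hinv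
  · refine key c a (Ne.symm hab) hcne ?_
    intro d hd
    have : ({c, a} : Finset α) = {a, c} := by ext; simp; tauto
    rw [this] at hd ⊢
    exact hinv d hd


lemma fix_modEq {α : Type*} [DecidableEq α] (σ : Equiv.Perm α) (m : ℕ)
    (hord : σ ^ 3 ^ m = 1) (S : Finset α) (hinv : ∀ a ∈ S, σ a ∈ S) :
    S.card ≡ (S.filter fun a => σ a = a).card [MOD 3] := by
  classical
  have himg : S.image σ = S := by
    apply Finset.eq_of_subset_of_card_le
    · intro x hx; obtain ⟨a, ha, rfl⟩ := Finset.mem_image.1 hx; exact hinv a ha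
    · rw [Finset.card_image_of_injective _ σ.injective]
  have hiff : ∀ x, x ∈ S ↔ σ x ∈ S := by
    intro x
    constructor
    · exact hinv x
    · intro hx
      rw [← himg] at hx
      obtain ⟨a, ha, h⟩ := Finset.mem_image.1 hx
      rwa [← σ.injective h]
  set τ : Equiv.Perm {x // x ∈ S} := σ.subtypePerm (fun x => (hiff x).symm) with hτ
  have hτpow : τ ^ 3 ^ m = 1 := by
    rw [hτ, Equiv.Perm.subtypePerm_pow]
    ext x
    simp [hord]
  haveI : Fact (Nat.Prime 3) := ⟨by norm_num⟩
  set H := Subgroup.zpowers τ with hH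
  have hP : IsPGroup 3 H := by
    intro g
    have hg : (g : Equiv.Perm {x // x ∈ S}) ^ 3 ^ m = 1 := by
      obtain ⟨k, hk⟩ := g.2
      have hk' : τ ^ k = (g : Equiv.Perm {x // x ∈ S}) := hk
      rw [← hk', ← zpow_natCast, ← zpow_mul, mul_comm, zpow_mul, zpow_natCast, hτpow, one_zpow]
    exact ⟨m, Subtype.ext (by push_cast; exact hg)⟩
  have key := hP.card_modEq_card_fixedPoints {x // x ∈ S}
  have h1 : Nat.card {x // x ∈ S} = S.card := by
    rw [Nat.card_eq_fintype_card, Fintype.card_coe]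
  have hmem : ∀ x : {x // x ∈ S}, x ∈ MulAction.fixedPoints H {x // x ∈ S} ↔ σ x.1 = x.1 := by
    intro x
    constructor
    · intro hx
      have := hx (⟨τ, Subgroup.mem_zpowers τ⟩ : H)
      exact congrArg Subtype.val this
    · intro hx g
      obtain ⟨k, hk⟩ := g.2
      have hfix : τ x = x := Subtype.ext hx
      have hzp : (τ ^ k) x = x := Function.IsFixedPt.perm_zpow hfix k
      show (g : Equiv.Perm {x // x ∈ S}) x = x
      rw [← hk]; exact hzp
  have h2 : Nat.card (MulAction.fixedPoints H {x // x ∈ S})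
      = (S.filter fun a => σ a = a).card := by
    have hset : MulAction.fixedPoints H {x // x ∈ S}
        = ↑(univ.filter (fun x : {x // x ∈ S} => σ x.1 = x.1)) := by
      ext x; simp [hmem x]
    rw [hset, Nat.card_coe_set_eq, Set.ncard_coe_finset]
    refine Finset.card_bij (fun x _ => x.1) ?_ ?_ ?_
    · intro x hx
      simp only [mem_filter, mem_univ, true_and] at hx ⊢
      exact ⟨x.2, hx⟩
    · intro x _ y _ h
      exact Subtype.ext h
    · intro a ha
      simp only [mem_filter] at ha
      exact ⟨⟨a, ha.1⟩, by simp [ha.2], rfl⟩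
  rw [h1, h2] at key
  exact key


section Design
variable {P : Type*} [Fintype P] [DecidableEq P]
  (hv : Fintype.card P = 79)
  (𝓑 : Finset (Finset P)) (hcard : 𝓑.card = 79)
  (hk : ∀ b ∈ 𝓑, b.card = 13)
  (hpair : ∀ p q : P, p ≠ q → (𝓑.filter (fun b => p ∈ b ∧ q ∈ b)).card = 2)

include hv hk hpair in
lemma blocks_through (p : P) : (𝓑.filter (fun b => p ∈ b)).card = 13 := by
  classical
  have h1 := doubleCount (𝓑.filter (fun b => p ∈ b)) (univ.erase p) (fun b q => q ∈ b)
  have L : ∀ b ∈ 𝓑.filter (fun b => p ∈ b),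
      ((univ.erase p).filter (fun q => q ∈ b)).card = 12 := by
    intro b hb
    rw [mem_filter] at hb
    have he : (univ.erase p).filter (fun q => q ∈ b) = b.erase p := by
      ext q; simp [mem_erase] <;> tauto
    rw [he, card_erase_of_mem hb.2, hk b hb.1]
  have R : ∀ q ∈ univ.erase p,
      ((𝓑.filter (fun b => p ∈ b)).filter (fun b => q ∈ b)).card = 2 := by
    intro q hq
    rw [mem_erase] at hq
    rw [filter_filter]
    exact hpair p q (Ne.symm hq.1)
  rw [Finset.sum_congr rfl L, Finset.sum_congr rfl R, Finset.sum_const, Finset.sum_const,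
    card_erase_of_mem (mem_univ p), card_univ, hv] at h1
  simp only [smul_eq_mul] at h1
  omega

include hv hcard hk hpair in
lemma inter_two {B C : Finset P} (hB : B ∈ 𝓑) (hC : C ∈ 𝓑) (hne : C ≠ B) :
    (B ∩ C).card = 2 := by
  classical
  set E := 𝓑.erase B with hE
  have hBcard : B.card = 13 := hk B hB
  have hEcard : E.card = 78 := by rw [hE, card_erase_of_mem hB, hcard]
  -- Sum 1
  have h1 := doubleCount E B (fun b q => q ∈ b)
  have L1 : ∀ q ∈ B, (E.filter (fun b => q ∈ b)).card = 12 := by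
    intro q hq
    have he : E.filter (fun b => q ∈ b) = (𝓑.filter (fun b => q ∈ b)).erase B := by
      ext b; simp [hE, mem_erase, mem_filter] <;> tauto
    rw [he, card_erase_of_mem (by simp [mem_filter, hB, hq]),
      blocks_through hv 𝓑 hk hpair q]
  rw [Finset.sum_congr rfl L1, Finset.sum_const, hBcard] at h1
  simp only [smul_eq_mul] at h1
  have hsum1 : ∑ b ∈ E, (B ∩ b).card = 156 := by
    have : ∀ b ∈ E, (B.filter (fun q => q ∈ b)).card = (B ∩ b).card := by
      intro b _; exact congrArg Finset.card Finset.filter_mem_eq_inter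
    rw [Finset.sum_congr rfl this] at h1
    omega
  -- Sum 2
  have h2 := doubleCount E B.offDiag (fun b pq => pq.1 ∈ b ∧ pq.2 ∈ b)
  have L2 : ∀ b ∈ E, (B.offDiag.filter (fun pq => pq.1 ∈ b ∧ pq.2 ∈ b)).card
      = (B ∩ b).card * (B ∩ b).card - (B ∩ b).card := by
    intro b _
    have he : B.offDiag.filter (fun pq => pq.1 ∈ b ∧ pq.2 ∈ b) = (B ∩ b).offDiag := by
      ext pq; simp [Finset.mem_offDiag, mem_inter] <;> tauto
    rw [he, Finset.offDiag_card]
  have R2 : ∀ pq ∈ B.offDiag, (E.filter (fun b => pq.1 ∈ b ∧ pq.2 ∈ b)).card = 1 := by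
    intro pq hpq
    rw [Finset.mem_offDiag] at hpq
    have he : E.filter (fun b => pq.1 ∈ b ∧ pq.2 ∈ b)
        = (𝓑.filter (fun b => pq.1 ∈ b ∧ pq.2 ∈ b)).erase B := by
      ext b; simp [hE, mem_erase, mem_filter] <;> tauto
    rw [he, card_erase_of_mem (by simp [mem_filter, hB, hpq.1, hpq.2.1]),
      hpair pq.1 pq.2 hpq.2.2]
  have hoff : B.offDiag.card = 156 := by rw [Finset.offDiag_card, hBcard]
  rw [Finset.sum_congr rfl L2, Finset.sum_congr rfl R2, Finset.sum_const, hoff] at h2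
  simp only [smul_eq_mul, mul_one] at h2
  -- variance
  have hzero : ∑ b ∈ E, (((B ∩ b).card : ℤ) - 2) ^ 2 = 0 := by
    have expand : ∀ b ∈ E, (((B ∩ b).card : ℤ) - 2) ^ 2
        = (((B ∩ b).card * (B ∩ b).card - (B ∩ b).card : ℕ) : ℤ)
          - 3 * ((B ∩ b).card : ℤ) + 4 := by
      intro b _
      have hx : (B ∩ b).card ≤ (B ∩ b).card * (B ∩ b).card := by
        rcases Nat.eq_zero_or_pos (B ∩ b).card with h | h
        · simp [h]
        · exact Nat.le_mul_of_pos_left _ h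
      push_cast [Nat.cast_sub hx]
      ring
    rw [Finset.sum_congr rfl expand, Finset.sum_add_distrib, Finset.sum_sub_distrib,
      ← Nat.cast_sum, h2, ← Finset.mul_sum, ← Nat.cast_sum, hsum1, Finset.sum_const, hEcard]
    norm_num
  have hterm := (Finset.sum_eq_zero_iff_of_nonneg (fun b _ => sq_nonneg _)).1 hzero
  have := hterm C (by simp [hE, mem_erase, hne, hC])
  have h3 : ((B ∩ C).card : ℤ) = 2 := by nlinarith [this]
  exact_mod_cast h3
end Design

/-- If D is a biplane with parameters (79,13,2) and x is a nontrivial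
automorphism of 3-power order, then x fixes exactly one point and exactly
one block. -/
theorem stmt_11 {P : Type*} [Fintype P] [DecidableEq P]
    (hv : Fintype.card P = 79)
    (𝓑 : Finset (Finset P)) (hcard : 𝓑.card = 79)
    (hk : ∀ b ∈ 𝓑, b.card = 13)
    (hpair : ∀ p q : P, p ≠ q →
      (𝓑.filter (fun b => p ∈ b ∧ q ∈ b)).card = 2)
    (σ : Equiv.Perm P) (hσ : ∀ b ∈ 𝓑, b.image σ ∈ 𝓑)
    (hne : σ ≠ 1) (hord : ∃ m : ℕ, orderOf σ = 3 ^ m) :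
    (Finset.univ.filter (fun p => σ p = p)).card = 1 ∧
    (𝓑.filter (fun b => b.image σ = b)).card = 1 := by
  classical
  obtain ⟨m, hm⟩ := hord
  have hpow : σ ^ 3 ^ m = 1 := by rw [← hm]; exact pow_orderOf_eq_one σ
  set τ : Equiv.Perm (Finset P) := σ.finsetCongr with hτdef
  have hτapp : ∀ b : Finset P, τ b = b.image σ := by
    intro b
    rw [hτdef, Equiv.finsetCongr_apply, Finset.map_eq_image]
    rfl
  have hτiter : ∀ (n : ℕ) (b : Finset P), (τ ^ n) b = b.image (⇑(σ ^ n)) := by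
    intro n
    induction n with
    | zero => intro b; simp
    | succ n ih =>
        intro b
        rw [pow_succ, Equiv.Perm.mul_apply, hτapp, ih, Finset.image_image, pow_succ,
          Equiv.Perm.coe_mul]
  have hτpow : τ ^ 3 ^ m = 1 := by
    apply Equiv.ext
    intro b
    rw [hτiter, hpow]
    simp
  have hτinv : ∀ b ∈ 𝓑, τ b ∈ 𝓑 := fun b hb => by rw [hτapp]; exact hσ b hb
  set F : Finset P := univ.filter (fun p => σ p = p) with hFdef
  set S : Finset (Finset P) := 𝓑.filter (fun b => b.image σ = b) with hSdef
  have hSτ : S = 𝓑.filter (fun b => τ b = b) :=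
    filter_congr (fun b _ => by rw [hτapp b])
  have hmemF : ∀ p, p ∈ F ↔ σ p = p := by intro p; simp [hFdef]
  have hmemS : ∀ b, b ∈ S ↔ b ∈ 𝓑 ∧ b.image σ = b := by intro b; simp [hSdef]
  have r13 : ∀ p : P, (𝓑.filter (fun b => p ∈ b)).card = 13 := blocks_through hv 𝓑 hk hpair
  have i2 : ∀ {B C : Finset P}, B ∈ 𝓑 → C ∈ 𝓑 → C ≠ B → (B ∩ C).card = 2 :=
    fun hB hC hne' => inter_two hv 𝓑 hcard hk hpair hB hC hne'
  -- G1 : blocks through two fixed points are fixed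
  have G1 : ∀ p q : P, σ p = p → σ q = q → p ≠ q →
      𝓑.filter (fun b => p ∈ b ∧ q ∈ b) ⊆ S := by
    intro p q hp hq hpq
    have hTinv : ∀ b ∈ 𝓑.filter (fun b => p ∈ b ∧ q ∈ b),
        τ b ∈ 𝓑.filter (fun b => p ∈ b ∧ q ∈ b) := by
      intro b hb
      rw [mem_filter] at hb ⊢
      refine ⟨hτinv b hb.1, ?_, ?_⟩
      · rw [hτapp]; exact hp ▸ mem_image_of_mem σ hb.2.1
      · rw [hτapp]; exact hq ▸ mem_image_of_mem σ hb.2.2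
    have hfix := fix_of_two τ m hτpow _ (hpair p q hpq) hTinv
    intro b hb
    rw [hmemS b]
    refine ⟨(mem_filter.1 hb).1, ?_⟩
    rw [← hτapp]
    exact hfix b hb
  -- G2 : intersection of two fixed blocks consists of fixed points
  have G2 : ∀ B C : Finset P, B ∈ S → C ∈ S → C ≠ B → ∀ a ∈ B ∩ C, σ a = a := by
    intro B C hB hC hne'
    have hBS := (hmemS B).1 hB
    have hCS := (hmemS C).1 hC
    apply fix_of_two σ m hpow (B ∩ C) (i2 hBS.1 hCS.1 hne')
    intro a ha
    rw [mem_inter] at ha ⊢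
    exact ⟨hBS.2 ▸ mem_image_of_mem σ ha.1, hCS.2 ▸ mem_image_of_mem σ ha.2⟩
  -- congruences
  have hFmod : F.card % 3 = 1 := by
    have h := fix_modEq σ m hpow univ (fun a _ => mem_univ _)
    rw [card_univ, hv] at h
    have h' : 79 % 3 = F.card % 3 := h
    omega
  have hSmod : S.card % 3 = 1 := by
    have h := fix_modEq τ m hτpow 𝓑 hτinv
    rw [hcard, ← hSτ] at h
    have h' : 79 % 3 = S.card % 3 := h
    omega
  have hDmod : ∀ B ∈ S, (B.filter (fun a => σ a = a)).card % 3 = 1 := by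
    intro B hB
    obtain ⟨hB𝓑, hBfix⟩ := (hmemS B).1 hB
    have hinvB : ∀ a ∈ B, σ a ∈ B := by
      intro a ha
      have := mem_image_of_mem σ ha
      rwa [hBfix] at this
    have h := fix_modEq σ m hpow B hinvB
    rw [hk B hB𝓑] at h
    have h' : 13 % 3 = _ % 3 := h
    omega
  have hDle : ∀ B ∈ S, (B.filter (fun a => σ a = a)).card ≤ 13 := by
    intro B hB
    have := card_filter_le B (fun a => σ a = a)
    rw [hk B ((hmemS B).1 hB).1] at this
    exact this
  have hCmod : ∀ p : P, σ p = p → (S.filter (fun b => p ∈ b)).card % 3 = 1 := by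
    intro p hp
    have hinvp : ∀ b ∈ 𝓑.filter (fun b => p ∈ b), τ b ∈ 𝓑.filter (fun b => p ∈ b) := by
      intro b hb
      rw [mem_filter] at hb ⊢
      exact ⟨hτinv b hb.1, by rw [hτapp]; exact hp ▸ mem_image_of_mem σ hb.2⟩
    have h := fix_modEq τ m hτpow _ hinvp
    rw [r13 p] at h
    have heq : (𝓑.filter (fun b => p ∈ b)).filter (fun b => τ b = b)
        = S.filter (fun b => p ∈ b) := by
      ext b
      simp only [mem_filter, hmemS b, hτapp b]
      tauto
    rw [heq] at h
    have h' : 13 % 3 = _ % 3 := h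
    omega
  have hCle : ∀ p : P, (S.filter (fun b => p ∈ b)).card ≤ 13 := by
    intro p
    calc (S.filter (fun b => p ∈ b)).card
        ≤ (𝓑.filter (fun b => p ∈ b)).card :=
          card_le_card (filter_subset_filter _ (filter_subset _ _))
      _ = 13 := r13 p
  -- R2' : d * d - d = 2 * (s - 1) for every fixed block
  have hR2 : ∀ B ∈ S, (B.filter (fun a => σ a = a)).card * (B.filter (fun a => σ a = a)).card
      - (B.filter (fun a => σ a = a)).card = 2 * (S.card - 1) := by
    intro B hB
    obtain ⟨hB𝓑, hBfix⟩ := (hmemS B).1 hB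
    have h := doubleCount (B.filter (fun a => σ a = a)).offDiag (S.erase B)
      (fun pq C => pq.1 ∈ C ∧ pq.2 ∈ C)
    have L : ∀ pq ∈ (B.filter (fun a => σ a = a)).offDiag,
        ((S.erase B).filter (fun C => pq.1 ∈ C ∧ pq.2 ∈ C)).card = 1 := by
      intro pq hpq
      rw [Finset.mem_offDiag] at hpq
      obtain ⟨h1, h2, hne'⟩ := hpq
      rw [mem_filter] at h1 h2
      have hsub := G1 pq.1 pq.2 h1.2 h2.2 hne'
      have heq : (S.erase B).filter (fun C => pq.1 ∈ C ∧ pq.2 ∈ C)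
          = (𝓑.filter (fun b => pq.1 ∈ b ∧ pq.2 ∈ b)).erase B := by
        ext C
        simp only [mem_erase, mem_filter]
        constructor
        · rintro ⟨⟨hCne, hCS⟩, hc⟩
          exact ⟨hCne, ((hmemS C).1 hCS).1, hc⟩
        · rintro ⟨hCne, hC𝓑, hc⟩
          exact ⟨⟨hCne, hsub (mem_filter.2 ⟨hC𝓑, hc⟩)⟩, hc⟩
      rw [heq, card_erase_of_mem (mem_filter.2 ⟨hB𝓑, h1.1, h2.1⟩), hpair pq.1 pq.2 hne']
    have R : ∀ C ∈ S.erase B,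
        ((B.filter (fun a => σ a = a)).offDiag.filter
          (fun pq => pq.1 ∈ C ∧ pq.2 ∈ C)).card = 2 := by
      intro C hC
      rw [mem_erase] at hC
      have hfix := G2 B C hB hC.2 hC.1
      have heq : (B.filter (fun a => σ a = a)).filter (fun a => a ∈ C) = B ∩ C := by
        ext a
        simp only [mem_filter, mem_inter]
        constructor
        · rintro ⟨⟨haB, _⟩, haC⟩; exact ⟨haB, haC⟩
        · intro ha; exact ⟨⟨ha.1, hfix a (mem_inter.2 ha)⟩, ha.2⟩
      rw [offDiag_filter_both, heq, Finset.offDiag_card,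
        i2 hB𝓑 ((hmemS C).1 hC.2).1 hC.1]
    rw [Finset.sum_congr rfl L, Finset.sum_congr rfl R, Finset.sum_const, Finset.sum_const,
      card_erase_of_mem hB, Finset.offDiag_card] at h
    simp only [smul_eq_mul, mul_one] at h
    omega
  -- R1' : c * c - c = 2 * (f - 1) for every fixed point
  have hR1 : ∀ p : P, σ p = p →
      (S.filter (fun b => p ∈ b)).card * (S.filter (fun b => p ∈ b)).card
      - (S.filter (fun b => p ∈ b)).card = 2 * (F.card - 1) := by
    intro p hp
    have h := doubleCount (S.filter (fun b => p ∈ b)).offDiag (univ.erase p)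
      (fun BC q => q ∈ BC.1 ∧ q ∈ BC.2)
    have L : ∀ BC ∈ (S.filter (fun b => p ∈ b)).offDiag,
        ((univ.erase p).filter (fun q => q ∈ BC.1 ∧ q ∈ BC.2)).card = 1 := by
      intro BC hBC
      rw [Finset.mem_offDiag] at hBC
      obtain ⟨h1, h2, hne'⟩ := hBC
      rw [mem_filter] at h1 h2
      have heq : (univ.erase p).filter (fun q => q ∈ BC.1 ∧ q ∈ BC.2)
          = (BC.1 ∩ BC.2).erase p := by
        ext q
        simp only [mem_erase, mem_filter, mem_inter, mem_univ, true_and]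
        tauto
      rw [heq, card_erase_of_mem (mem_inter.2 ⟨h1.2, h2.2⟩),
        i2 ((hmemS BC.1).1 h1.1).1 ((hmemS BC.2).1 h2.1).1 (Ne.symm hne')]
    have R2 : ∀ q ∈ univ.erase p,
        ((S.filter (fun b => p ∈ b)).offDiag.filter
          (fun BC => q ∈ BC.1 ∧ q ∈ BC.2)).card = if σ q = q then 2 else 0 := by
      intro q hq
      rw [mem_erase] at hq
      rw [offDiag_filter_both (S.filter (fun b => p ∈ b)) (fun b => q ∈ b)]
      by_cases hfq : σ q = q
      · rw [if_pos hfq]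
        have heq : (S.filter (fun b => p ∈ b)).filter (fun b => q ∈ b)
            = 𝓑.filter (fun b => p ∈ b ∧ q ∈ b) := by
          ext b
          simp only [mem_filter]
          constructor
          · rintro ⟨⟨hbS, hbp⟩, hbq⟩; exact ⟨((hmemS b).1 hbS).1, hbp, hbq⟩
          · rintro ⟨hb𝓑, hbp, hbq⟩
            exact ⟨⟨G1 p q hp hfq (Ne.symm hq.1) (mem_filter.2 ⟨hb𝓑, hbp, hbq⟩), hbp⟩, hbq⟩
        rw [heq, Finset.offDiag_card, hpair p q (Ne.symm hq.1)]
      · rw [if_neg hfq, Finset.offDiag_card]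
        have hle : ((S.filter (fun b => p ∈ b)).filter (fun b => q ∈ b)).card ≤ 1 := by
          rw [Finset.card_le_one]
          intro B hB C hC
          by_contra hBC
          rw [mem_filter, mem_filter] at hB hC
          exact hfq (G2 C B hC.1.1 hB.1.1 hBC q (mem_inter.2 ⟨hC.2, hB.2⟩))
        rcases Nat.le_one_iff_eq_zero_or_eq_one.1 hle with h1 | h1 <;> simp [h1]
    rw [Finset.sum_congr rfl L, Finset.sum_congr rfl R2, Finset.sum_const,
      Finset.sum_ite, Finset.sum_const, Finset.sum_const, Finset.offDiag_card] at h
    simp only [smul_eq_mul, mul_one, mul_zero, add_zero] at h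
    have hFerase : (univ.erase p).filter (fun q => σ q = q) = F.erase p := by
      ext q
      simp only [mem_erase, mem_filter, hmemF q, mem_univ, true_and]
      tauto
    rw [hFerase, card_erase_of_mem ((hmemF p).2 hp)] at h
    omega
  -- R3 : double count of incidences between fixed points and fixed blocks
  have hN : ∑ p ∈ F, (S.filter (fun b => p ∈ b)).card
      = ∑ B ∈ S, (B.filter (fun a => σ a = a)).card := by
    have h := doubleCount F S (fun p b => p ∈ b)
    have heq : ∀ B ∈ S, (F.filter (fun p => p ∈ B)).card
        = (B.filter (fun a => σ a = a)).card := by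
      intro B _
      congr 1
      ext a
      simp only [mem_filter, hmemF a]  -- may need mem stuff
      tauto
    rw [h, Finset.sum_congr rfl heq]
  -- I2 : 13 * f ≤ N + (79 - s)
  have hI2 : 13 * F.card ≤ (∑ B ∈ S, (B.filter (fun a => σ a = a)).card) + (79 - S.card) := by
    have h := doubleCount F 𝓑 (fun p b => p ∈ b)
    rw [Finset.sum_congr rfl (fun p _ => r13 p), Finset.sum_const, smul_eq_mul] at h
    rw [← Finset.sum_filter_add_sum_filter_not 𝓑 (fun b => b.image σ = b)] at h
    have h1 : ∑ b ∈ 𝓑.filter (fun b => b.image σ = b), (F.filter (fun p => p ∈ b)).card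
        = ∑ B ∈ S, (B.filter (fun a => σ a = a)).card := by
      rw [← hSdef]
      refine Finset.sum_congr rfl ?_
      intro B _
      congr 1
      ext a
      simp only [mem_filter, hmemF a]
      tauto
    have h2 : ∑ b ∈ 𝓑.filter (fun b => ¬ b.image σ = b), (F.filter (fun p => p ∈ b)).card
        ≤ 79 - S.card := by
      have hb1 : ∀ b ∈ 𝓑.filter (fun b => ¬ b.image σ = b),
          (F.filter (fun p => p ∈ b)).card ≤ 1 := by
        intro b hb
        rw [mem_filter] at hb
        rw [Finset.card_le_one]
        intro x hx y hy
        by_contra hxy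
        rw [mem_filter, hmemF] at hx hy
        exact hb.2 (((hmemS b).1 (G1 x y hx.1 hy.1 hxy
          (mem_filter.2 ⟨hb.1, hx.2, hy.2⟩))).2)
      calc ∑ b ∈ 𝓑.filter (fun b => ¬ b.image σ = b), (F.filter (fun p => p ∈ b)).card
          ≤ ∑ _b ∈ 𝓑.filter (fun b => ¬ b.image σ = b), 1 := Finset.sum_le_sum hb1
        _ = (𝓑.filter (fun b => ¬ b.image σ = b)).card := by rw [Finset.sum_const, smul_eq_mul, mul_one]
        _ ≤ 79 - S.card := by
            rw [Finset.filter_not, ← hSdef, card_sdiff_of_subset (filter_subset _ _), hcard]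
    omega
  -- G3 : a non-fixed point lies on at most one fixed block
  have hG3 : ∀ q : P, σ q ≠ q → (S.filter (fun b => q ∈ b)).card ≤ 1 := by
    intro q hfq
    rw [Finset.card_le_one]
    intro B hB C hC
    by_contra hBC
    rw [mem_filter] at hB hC
    exact hfq (G2 C B hC.1 hB.1 hBC q (mem_inter.2 ⟨hC.2, hB.2⟩))
  -- main step : F.card < 2
  have hFlt : F.card < 2 := by
    by_contra hF2'
    push_neg at hF2'
    obtain ⟨p, hpF, q, hqF, hpq⟩ := Finset.one_lt_card.1 hF2'
    have hp := (hmemF p).1 hpF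
    have hq := (hmemF q).1 hqF
    have hS2 : 2 ≤ S.card := by
      have h := card_le_card (G1 p q hp hq hpq)
      rw [hpair p q hpq] at h
      exact h
    obtain ⟨B0, hB0⟩ := Finset.card_pos.1 (by omega : 0 < S.card)
    have hc0 := solve_quad (hR1 p hp) (hCmod p hp) (hCle p) hF2'
    have hd0 := solve_quad (hR2 B0 hB0) (hDmod B0 hB0) (hDle B0 hB0) hS2
    have hceq : ∀ p' ∈ F, (S.filter (fun b => p' ∈ b)).card
        = (S.filter (fun b => p ∈ b)).card := by
      intro p' hp'
      have h1 := solve_quad (hR1 p' ((hmemF p').1 hp')) (hCmod p' ((hmemF p').1 hp'))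
        (hCle p') hF2'
      rcases hc0 with ⟨h2, h3⟩ | ⟨h2, h3⟩ | ⟨h2, h3⟩ | ⟨h2, h3⟩ <;>
        rcases h1 with ⟨h4, h5⟩ | ⟨h4, h5⟩ | ⟨h4, h5⟩ | ⟨h4, h5⟩ <;> omega
    have hdeq : ∀ B ∈ S, (B.filter (fun a => σ a = a)).card
        = (B0.filter (fun a => σ a = a)).card := by
      intro B hB
      have h1 := solve_quad (hR2 B hB) (hDmod B hB) (hDle B hB) hS2
      rcases hd0 with ⟨h2, h3⟩ | ⟨h2, h3⟩ | ⟨h2, h3⟩ | ⟨h2, h3⟩ <;>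
        rcases h1 with ⟨h4, h5⟩ | ⟨h4, h5⟩ | ⟨h4, h5⟩ | ⟨h4, h5⟩ <;> omega
    have hNfe : ∑ p' ∈ F, (S.filter (fun b => p' ∈ b)).card
        = F.card * (S.filter (fun b => p ∈ b)).card := by
      rw [Finset.sum_congr rfl hceq, Finset.sum_const, smul_eq_mul]
    have hNse : ∑ B ∈ S, (B.filter (fun a => σ a = a)).card
        = S.card * (B0.filter (fun a => σ a = a)).card := by
      rw [Finset.sum_congr rfl hdeq, Finset.sum_const, smul_eq_mul]
    have hNN : F.card * (S.filter (fun b => p ∈ b)).card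
        = S.card * (B0.filter (fun a => σ a = a)).card := by
      rw [← hNfe, hN, hNse]
    rw [hNse] at hI2
    rcases hc0 with ⟨hc, hf⟩ | ⟨hc, hf⟩ | ⟨hc, hf⟩ | ⟨hc, hf⟩ <;>
      rcases hd0 with ⟨hd, hs⟩ | ⟨hd, hs⟩ | ⟨hd, hs⟩ | ⟨hd, hs⟩ <;>
      simp only [hc, hf, hd, hs] at hNN hI2 <;> try omega
    -- remaining case 1 : f = s = 7, c = d = 4
    · -- every non-fixed point lies on exactly one fixed block
      have hE1 : ∀ q' : P, σ q' ≠ q' → (S.filter (fun b => q' ∈ b)).card = 1 := by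
        intro q' hfq'
        have hle1 := hG3 q' hfq'
        rcases Nat.lt_or_ge (S.filter (fun b => q' ∈ b)).card 1 with hlt | hge
        · exfalso
          have hempty : S.filter (fun b => q' ∈ b) = ∅ := by
            rw [← Finset.card_eq_zero]; omega
          have h := doubleCount (𝓑.filter (fun b => q' ∈ b)) F (fun b p' => p' ∈ b)
          have hRs : ∀ p' ∈ F, ((𝓑.filter (fun b => q' ∈ b)).filter
              (fun b => p' ∈ b)).card = 2 := by
            intro p' hp'
            rw [filter_filter]
            exact hpair q' p' (fun hqp => hfq' (hqp ▸ (hmemF p').1 hp'))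
          have hLs : ∀ b ∈ 𝓑.filter (fun b => q' ∈ b),
              (F.filter (fun p' => p' ∈ b)).card ≤ 1 := by
            intro b hb
            rw [mem_filter] at hb
            rw [Finset.card_le_one]
            intro x hx y hy
            by_contra hxy
            rw [mem_filter, hmemF] at hx hy
            have hbS : b ∈ S := G1 x y hx.1 hy.1 hxy (mem_filter.2 ⟨hb.1, hx.2, hy.2⟩)
            have : b ∈ S.filter (fun b => q' ∈ b) := mem_filter.2 ⟨hbS, hb.2⟩
            rw [hempty] at this
            exact absurd this (notMem_empty b)
          rw [Finset.sum_congr rfl hRs, Finset.sum_const, smul_eq_mul] at h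
          have hbound : ∑ b ∈ 𝓑.filter (fun b => q' ∈ b),
              (F.filter (fun p' => p' ∈ b)).card ≤ 13 := by
            calc ∑ b ∈ 𝓑.filter (fun b => q' ∈ b), (F.filter (fun p' => p' ∈ b)).card
                ≤ ∑ _b ∈ 𝓑.filter (fun b => q' ∈ b), 1 := Finset.sum_le_sum hLs
              _ = (𝓑.filter (fun b => q' ∈ b)).card := by
                  rw [Finset.sum_const, smul_eq_mul, mul_one]
              _ = 13 := r13 q'
          omega
        · omega
      -- exact incidence count
      have h := doubleCount S univ (fun b p' => p' ∈ b)
      have hLL : ∀ b ∈ S, (univ.filter (fun p' => p' ∈ b)).card = 13 := by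
        intro b hb
        rw [Finset.filter_univ_mem]
        exact hk b ((hmemS b).1 hb).1
      rw [Finset.sum_congr rfl hLL, Finset.sum_const, smul_eq_mul] at h
      rw [← Finset.sum_filter_add_sum_filter_not univ (fun p' => σ p' = p')] at h
      have hfix : ∑ p' ∈ univ.filter (fun p' => σ p' = p'),
          (S.filter (fun b => p' ∈ b)).card = 28 := by
        rw [← hFdef, Finset.sum_congr rfl hceq, Finset.sum_const, smul_eq_mul, hf, hc]
      have hnonfix : ∑ p' ∈ univ.filter (fun p' => ¬ σ p' = p'),
          (S.filter (fun b => p' ∈ b)).card = 72 := by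
        have he : ∀ p' ∈ univ.filter (fun p' => ¬ σ p' = p'),
            (S.filter (fun b => p' ∈ b)).card = 1 := by
          intro p' hp'
          rw [mem_filter] at hp'
          exact hE1 p' hp'.2
        rw [Finset.sum_congr rfl he, Finset.sum_const, smul_eq_mul, mul_one,
          Finset.filter_not, ← hFdef, card_sdiff_of_subset (subset_univ F), card_univ, hv, hf]
      rw [hfix, hnonfix, hs] at h
      omega
    -- remaining case 2 : f = 79, σ = 1
    · have hFuniv : F = univ := Finset.eq_univ_of_card F (by rw [hf, hv])
      refine hne (Equiv.ext fun x => ?_)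
      have hx : x ∈ F := hFuniv ▸ mem_univ x
      rw [Equiv.Perm.one_apply]
      exact (hmemF x).1 hx
  -- conclusion
  have hSlt : S.card < 2 := by
    by_contra hS2'
    push_neg at hS2'
    obtain ⟨B, hB, C, hC, hBC⟩ := Finset.one_lt_card.1 hS2'
    have hsub : B ∩ C ⊆ F := by
      intro a ha
      exact (hmemF a).2 (G2 B C hB hC (Ne.symm hBC) a ha)
    have h2 := card_le_card hsub
    rw [i2 ((hmemS B).1 hB).1 ((hmemS C).1 hC).1 (Ne.symm hBC)] at h2
    omega
  exact ⟨by omega, by omega⟩
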